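/- Let d ≥ 1, a > 0, and let f : ℝ^d → ℂ be differentiable with sup_{x ∈ ℝ^d} |∇f(x)| < ∞ and ∫_{ℝ^d} |f(x)|² e^{2a|x|} dx < ∞. Then there exists a constant C > 0 (depending on d, a, sup|f|, sup|∇f| and the weighted L² norm of f) such that |f(x)| ≤ C e^{−a|x|/(d+2)} for all x ∈ ℝ^d. -/

import Mathlib

open MeasureTheory

theorem stmt3 (d : ℕ) (hd : 1 ≤ d) (a : ℝ) (ha : 0 < a)
    (f : EuclideanSpace ℝ (Fin d) → ℂ) (hf : Differentiable ℝ f)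
    (M : ℝ) (hM : ∀ x, ‖fderiv ℝ f x‖ ≤ M)
    (hint : Integrable
      (fun x : EuclideanSpace ℝ (Fin d) => ‖f x‖ ^ 2 * Real.exp (2 * a * ‖x‖))
      volume) :
    ∃ C : ℝ, 0 < C ∧ ∀ x : EuclideanSpace ℝ (Fin d),
      ‖f x‖ ≤ C * Real.exp (-(a * ‖x‖) / (d + 2)) := by
  classical
  have : Nontrivial (EuclideanSpace ℝ (Fin d)) :=
    Module.nontrivial_of_finrank_pos (R := ℝ)
      (by rw [finrank_euclideanSpace_fin]; omega)
  set M' : ℝ := max M 1 with hM'def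
  have hM'pos : (0:ℝ) < M' := lt_of_lt_of_le one_pos (le_max_right _ _)
  have hM'le : ∀ x, ‖fderiv ℝ f x‖ ≤ M' := fun x => (hM x).trans (le_max_left _ _)
  have hlip : ∀ x y : EuclideanSpace ℝ (Fin d), ‖f y - f x‖ ≤ M' * ‖y - x‖ := by
    intro x y
    exact Convex.norm_image_sub_le_of_norm_fderiv_le (fun z _ => hf z)
      (fun z _ => hM'le z) convex_univ (Set.mem_univ x) (Set.mem_univ y)
  set v : ℝ := (volume (Metric.ball (0 : EuclideanSpace ℝ (Fin d)) 1)).toReal with hvdef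
  have hvpos : 0 < v := by
    apply ENNReal.toReal_pos
    · exact (Metric.measure_ball_pos volume _ one_pos).ne'
    · exact (measure_ball_lt_top).ne
  set I : ℝ := ∫ x, ‖f x‖ ^ 2 * Real.exp (2 * a * ‖x‖) with hIdef
  have hInn : 0 ≤ I := by
    apply integral_nonneg
    intro x
    positivity
  -- the key estimate
  have key : ∀ (x₀ : EuclideanSpace ℝ (Fin d)) (r : ℝ), 0 ≤ r →
      M' * r ≤ ‖f x₀‖ / 2 →
      (‖f x₀‖ / 2) ^ 2 * Real.exp (2 * a * (‖x₀‖ - r)) * (r ^ d * v) ≤ I := by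
    intro x₀ r hr hMr
    set t : ℝ := ‖f x₀‖ with htdef
    have ht0 : 0 ≤ t := norm_nonneg _
    have hball : volume (Metric.ball x₀ r) = ENNReal.ofReal (r ^ d) *
        volume (Metric.ball (0 : EuclideanSpace ℝ (Fin d)) 1) := by
      rw [Measure.addHaar_ball volume x₀ hr, finrank_euclideanSpace_fin]
    have hballtop : volume (Metric.ball x₀ r) ≠ ⊤ := measure_ball_lt_top.ne
    have hlow : ∀ x ∈ Metric.ball x₀ r,
        (t / 2) ^ 2 * Real.exp (2 * a * (‖x₀‖ - r)) ≤
          ‖f x‖ ^ 2 * Real.exp (2 * a * ‖x‖) := by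
      intro x hx
      have hdist : ‖x - x₀‖ < r := by
        rw [← dist_eq_norm]; exact hx
      have h1 : t - M' * r ≤ ‖f x‖ := by
        have := hlip x₀ x
        have h2 : ‖f x₀‖ - ‖f x‖ ≤ ‖f x - f x₀‖ := by
          have := norm_sub_norm_le (f x₀) (f x)
          rwa [norm_sub_rev] at this
        have h3 : M' * ‖x - x₀‖ ≤ M' * r := by
          exact mul_le_mul_of_nonneg_left hdist.le hM'pos.le
        rw [← htdef] at h2
        linarith
      have habs : t / 2 ≤ ‖f x‖ := by linarith
      have hexp : Real.exp (2 * a * (‖x₀‖ - r)) ≤ Real.exp (2 * a * ‖x‖) := by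
        apply Real.exp_le_exp.mpr
        have hnx : ‖x₀‖ - r ≤ ‖x‖ := by
          have := norm_sub_norm_le x₀ x
          rw [norm_sub_rev x₀ x] at this
          calc ‖x₀‖ - r ≤ ‖x₀‖ - ‖x - x₀‖ := by linarith
            _ ≤ ‖x‖ := by linarith
        nlinarith
      have h4 : (t / 2) ^ 2 ≤ ‖f x‖ ^ 2 := by
        apply pow_le_pow_left₀ (by linarith) habs
      exact mul_le_mul h4 hexp (Real.exp_pos _).le (by positivity)
    have hIOn : IntegrableOn
        (fun x : EuclideanSpace ℝ (Fin d) => ‖f x‖ ^ 2 * Real.exp (2 * a * ‖x‖))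
        (Metric.ball x₀ r) volume := hint.integrableOn
    have h5 := setIntegral_ge_of_const_le (c := (t / 2) ^ 2 * Real.exp (2 * a * (‖x₀‖ - r)))
      Metric.isOpen_ball.measurableSet hballtop hlow hIOn
    have h6 : (∫ x in Metric.ball x₀ r,
        ‖f x‖ ^ 2 * Real.exp (2 * a * ‖x‖)) ≤ I := by
      apply setIntegral_le_integral hint
      filter_upwards with x using by positivity
    have h7 : (volume (Metric.ball x₀ r)).toReal = r ^ d * v := by
      rw [hball, ENNReal.toReal_mul, ENNReal.toReal_ofReal (by positivity)]
    rw [measureReal_def, h7, smul_eq_mul] at h5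
    linarith
  -- Step A: uniform bound on |f|
  set T : ℝ := max (2 * M') (Real.sqrt (4 * (I + 1) * Real.exp (2 * a) / v)) with hTdef
  have hTpos : 0 < T := lt_of_lt_of_le (by linarith) (le_max_left _ _)
  have hbdd : ∀ x, ‖f x‖ ≤ T := by
    intro x₀
    set t : ℝ := ‖f x₀‖ with htdef
    by_cases h : t ≤ 2 * M'
    · exact h.trans (le_max_left _ _)
    · push_neg at h
      have hMr : M' * 1 ≤ t / 2 := by linarith
      have hk := key x₀ 1 zero_le_one hMr
      simp only [one_pow, one_mul] at hk
      have hexp : Real.exp (-(2 * a)) ≤ Real.exp (2 * a * (‖x₀‖ - 1)) := by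
        apply Real.exp_le_exp.mpr
        have : (0:ℝ) ≤ ‖x₀‖ := norm_nonneg _
        nlinarith
      have h1 : (t / 2) ^ 2 * Real.exp (-(2 * a)) * v ≤ I := by
        calc (t / 2) ^ 2 * Real.exp (-(2 * a)) * v
            ≤ (t / 2) ^ 2 * Real.exp (2 * a * (‖x₀‖ - 1)) * v := by
              apply mul_le_mul_of_nonneg_right _ hvpos.le
              exact mul_le_mul_of_nonneg_left hexp (by positivity)
          _ ≤ I := hk
      have h2 : t ^ 2 ≤ 4 * (I + 1) * Real.exp (2 * a) / v := by
        have he : Real.exp (-(2 * a)) = (Real.exp (2 * a))⁻¹ := by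
          rw [Real.exp_neg]
        rw [he] at h1
        have hepos : 0 < Real.exp (2 * a) := Real.exp_pos _
        rw [le_div_iff₀ hvpos]
        have h1' : (t / 2) ^ 2 * v ≤ I * Real.exp (2 * a) := by
          have hh := mul_le_mul_of_nonneg_right h1 hepos.le
          calc (t / 2) ^ 2 * v
              = (t / 2) ^ 2 * (Real.exp (2 * a))⁻¹ * v * Real.exp (2 * a) := by
                field_simp
            _ ≤ I * Real.exp (2 * a) := hh
        linarith [h1', hepos]
      have ht0 : 0 ≤ t := norm_nonneg _
      calc t = Real.sqrt (t ^ 2) := by rw [Real.sqrt_sq ht0]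
        _ ≤ Real.sqrt (4 * (I + 1) * Real.exp (2 * a) / v) := Real.sqrt_le_sqrt h2
        _ ≤ T := le_max_right _ _
  -- Step B
  set R : ℝ := T / (2 * M') with hRdef
  have hRpos : 0 < R := by positivity
  set K : ℝ := (I + 1) * 4 * (2 * M') ^ d * Real.exp (2 * a * R) / v with hKdef
  have hKpos : 0 < K := by positivity
  have hmain : ∀ x : EuclideanSpace ℝ (Fin d),
      ‖f x‖ ^ (d + 2) ≤ K * Real.exp (-(2 * a) * ‖x‖) := by
    intro x₀
    set t : ℝ := ‖f x₀‖ with htdef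
    have ht0 : 0 ≤ t := norm_nonneg _
    set r : ℝ := t / (2 * M') with hrdef
    have hr0 : 0 ≤ r := by positivity
    have hMr : M' * r ≤ t / 2 := by
      have : M' * (t / (2 * M')) = t / 2 := by
        field_simp
      rw [hrdef, this]
    have hk := key x₀ r hr0 hMr
    have hrR : r ≤ R := by
      rw [hrdef, hRdef]
      gcongr
      exact hbdd x₀
    set E : ℝ := Real.exp (2 * a * ‖x₀‖) with hEdef
    have hEpos : 0 < E := Real.exp_pos _
    set eR : ℝ := Real.exp (2 * a * R) with heRdef
    have heRpos : 0 < eR := Real.exp_pos _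
    have h1 : E * eR⁻¹ ≤ Real.exp (2 * a * (‖x₀‖ - r)) := by
      rw [hEdef, heRdef, ← Real.exp_neg, ← Real.exp_add]
      apply Real.exp_le_exp.mpr
      nlinarith [norm_nonneg x₀]
    have h2 : (t / 2) ^ 2 * (E * eR⁻¹) * (r ^ d * v) ≤ I := by
      calc (t / 2) ^ 2 * (E * eR⁻¹) * (r ^ d * v)
          ≤ (t / 2) ^ 2 * Real.exp (2 * a * (‖x₀‖ - r)) * (r ^ d * v) := by
            apply mul_le_mul_of_nonneg_right _ (by positivity)
            exact mul_le_mul_of_nonneg_left h1 (by positivity)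
        _ ≤ I := hk
    set P : ℝ := (2 * M') ^ d with hPdef
    have hPpos : 0 < P := by positivity
    have hrd : r ^ d = t ^ d / P := by
      rw [hrdef, hPdef, div_pow]
    rw [hrd, div_pow] at h2
    have h3 : t ^ 2 * t ^ d * (E * v) ≤ (I + 1) * 4 * P * eR := by
      have h2' := mul_le_mul_of_nonneg_right h2 (by positivity : (0:ℝ) ≤ 4 * P * eR)
      have hcalc : t ^ 2 / 2 ^ 2 * (E * eR⁻¹) * (t ^ d / P * v) * (4 * P * eR)
          = t ^ 2 * t ^ d * (E * v) := by
        calc t ^ 2 / 2 ^ 2 * (E * eR⁻¹) * (t ^ d / P * v) * (4 * P * eR)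
            = t ^ 2 * t ^ d * (E * v) * (((2:ℝ) ^ 2)⁻¹ * 4) * (eR⁻¹ * eR) * (P⁻¹ * P) := by
              ring
          _ = t ^ 2 * t ^ d * (E * v) := by
              rw [inv_mul_cancel₀ heRpos.ne', inv_mul_cancel₀ hPpos.ne']
              ring
      rw [hcalc] at h2'
      have hPe : 0 < P * eR := mul_pos hPpos heRpos
      linarith [h2', hPe]
    have hgoal : t ^ (d + 2) * (E * v) ≤ (I + 1) * 4 * P * eR := by
      rw [pow_add]
      calc t ^ d * t ^ 2 * (E * v) = t ^ 2 * t ^ d * (E * v) := by ring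
        _ ≤ _ := h3
    have hexpinv : Real.exp (-(2 * a) * ‖x₀‖) = E⁻¹ := by
      rw [hEdef, ← Real.exp_neg]; ring_nf
    rw [hKdef, hexpinv]
    have hEq : (I + 1) * 4 * P * eR / v * E⁻¹ = ((I + 1) * 4 * P * eR) / (E * v) := by
      rw [← one_div, div_mul_div_comm, mul_one, mul_comm v E]
    rw [hEq, le_div_iff₀ (mul_pos hEpos hvpos)]
    exact hgoal
  -- extract (d+2)-th roots
  set n : ℕ := d + 2 with hndef
  have hn0 : ((n : ℝ)) ≠ 0 := by
    rw [hndef]; push_cast; positivity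
  refine ⟨K ^ ((n : ℝ))⁻¹, Real.rpow_pos_of_pos hKpos _, fun x => ?_⟩
  have ht0 : 0 ≤ ‖f x‖ := norm_nonneg _
  set t : ℝ := ‖f x‖ with htdef
  have h1 : t = ((t ^ n : ℝ)) ^ ((n : ℝ))⁻¹ := by
    rw [← Real.rpow_natCast t n, ← Real.rpow_mul ht0, mul_inv_cancel₀ hn0, Real.rpow_one]
  have h2 : ((t ^ n : ℝ)) ^ ((n : ℝ))⁻¹ ≤ (K * Real.exp (-(2 * a) * ‖x‖)) ^ ((n : ℝ))⁻¹ := by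
    apply Real.rpow_le_rpow (by positivity) (hmain x) (by positivity)
  have h3 : (K * Real.exp (-(2 * a) * ‖x‖)) ^ ((n : ℝ))⁻¹
      = K ^ ((n : ℝ))⁻¹ * Real.exp (-(2 * a) * ‖x‖ * ((n : ℝ))⁻¹) := by
    rw [Real.mul_rpow hKpos.le (Real.exp_pos _).le, ← Real.exp_mul]
  have h4 : Real.exp (-(2 * a) * ‖x‖ * ((n : ℝ))⁻¹) ≤ Real.exp (-(a * ‖x‖) / ((d : ℝ) + 2)) := by
    apply Real.exp_le_exp.mpr
    have hc : ((n : ℝ)) = (d : ℝ) + 2 := by rw [hndef]; push_cast; ring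
    rw [hc, ← div_eq_mul_inv]
    have hdpos : (0:ℝ) < (d : ℝ) + 2 := by positivity
    rw [div_le_div_iff₀ hdpos hdpos]
    nlinarith [mul_nonneg (mul_nonneg ha.le (norm_nonneg x)) hdpos.le]
  calc t = ((t ^ n : ℝ)) ^ ((n : ℝ))⁻¹ := h1
    _ ≤ (K * Real.exp (-(2 * a) * ‖x‖)) ^ ((n : ℝ))⁻¹ := h2
    _ = K ^ ((n : ℝ))⁻¹ * Real.exp (-(2 * a) * ‖x‖ * ((n : ℝ))⁻¹) := h3
    _ ≤ K ^ ((n : ℝ))⁻¹ * Real.exp (-(a * ‖x‖) / ((d : ℝ) + 2)) := by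
        exact mul_le_mul_of_nonneg_left h4 (Real.rpow_pos_of_pos hKpos _).le
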